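/- Let κ be a regular cardinal, μ a (κ,κ⁺)-cardinal, α < κ⁺, and δ a limit ordinal < ht(μ). If X ∈ μ has rank less than δ, then there is δ' < δ such that X ∩ μ_δ(α) ⊆ μ_{δ'}(α). -/

import Mathlib

open Set Cardinal Ordinal

noncomputable section

/-- Lower a (small) ordinal of `Ordinal.{1}` to `Ordinal.{0}` (the inverse of `Ordinal.lift`
on its range). -/
noncomputable def olower (o : Ordinal.{1}) : Ordinal.{0} :=
  sInf {a : Ordinal.{0} | Ordinal.lift.{1} a = o}

/-- The order type of a set of ordinals. -/
noncomputable def otp (A : Set Ordinal.{0}) : Ordinal.{0} :=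
  olower (Ordinal.type (Subrel ((· < ·) : Ordinal → Ordinal → Prop) (· ∈ A)))

/-- The canonical order-preserving transfer map from a set of ordinals `X` to a set of
ordinals `Y` of the same order type: an element `a ∈ X` is sent to the unique element of `Y`
occupying the same position. -/
noncomputable def omap (X Y : Set Ordinal) (a : Ordinal) : Ordinal :=
  sInf {b | b ∈ Y ∧ otp (Y ∩ Set.Iio b) = otp (X ∩ Set.Iio a)}

/-- `IsStar X₁ X₂ X` says `X = X₁ * X₂`: `X₁` and `X₂` have the same order type,
`X = X₁ ∪ X₂`, and `X₁ ∩ X₂ < X₁ \ X₂ < X₂ \ X₁` elementwise. -/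
def IsStar (X₁ X₂ X : Set Ordinal) : Prop :=
  otp X₁ = otp X₂ ∧ X = X₁ ∪ X₂ ∧
  (∀ a ∈ X₁ ∩ X₂, ∀ b ∈ X₁ \ X₂, a < b) ∧
  (∀ b ∈ X₁ \ X₂, ∀ c ∈ X₂ \ X₁, b < c)

set_option linter.deprecated false in
/-- A `(κ,κ⁺)`-cardinal (a neat simplified `(κ,1)`-morass presented as a family of sets):
a family `μ ⊆ ℘_κ(κ⁺)` which is well-founded under strict inclusion, locally small,
homogeneous, directed, locally almost directed, covers `κ⁺` and is neat. -/
structure TwoCardinal (κ : Cardinal.{0}) where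
  mu : Set (Set Ordinal)
  mem_sub : ∀ X ∈ mu, X ⊆ Set.Iio (Order.succ κ).ord
  mem_small : ∀ X ∈ mu, (otp X).card < κ
  wf : WellFounded fun X Y : mu => (X : Set Ordinal) ⊂ (Y : Set Ordinal)
  locSmall : ∀ X : mu,
    #{Z : mu // (Z : Set Ordinal) ⊂ (X : Set Ordinal)} < Cardinal.lift.{1} κ
  homog : ∀ X Y : mu, (wf.apply X).rank = (wf.apply Y).rank →
    otp (X : Set Ordinal) = otp (Y : Set Ordinal) ∧
    {Z | Z ∈ mu ∧ Z ⊂ (Y : Set Ordinal)} =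
      (fun Z => omap (X : Set Ordinal) (Y : Set Ordinal) '' Z) ''
        {Z | Z ∈ mu ∧ Z ⊂ (X : Set Ordinal)}
  directed : ∀ X ∈ mu, ∀ Y ∈ mu, ∃ Z ∈ mu, X ⊆ Z ∧ Y ⊆ Z
  locAlmostDirected : ∀ X : mu,
    (∀ Z₁ ∈ mu, ∀ Z₂ ∈ mu, Z₁ ⊂ (X : Set Ordinal) → Z₂ ⊂ (X : Set Ordinal) →
      ∃ Z ∈ mu, Z ⊂ (X : Set Ordinal) ∧ Z₁ ⊆ Z ∧ Z₂ ⊆ Z) ∨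
    (∃ X₁ X₂ : mu, (wf.apply X₁).rank = (wf.apply X₂).rank ∧
      IsStar (X₁ : Set Ordinal) (X₂ : Set Ordinal) (X : Set Ordinal) ∧
      {Z | Z ∈ mu ∧ Z ⊂ (X : Set Ordinal)} =
        {Z | Z ∈ mu ∧ Z ⊂ (X₁ : Set Ordinal)} ∪ {Z | Z ∈ mu ∧ Z ⊂ (X₂ : Set Ordinal)} ∪
          {(X₁ : Set Ordinal), (X₂ : Set Ordinal)})
  covers : ⋃₀ mu = Set.Iio (Order.succ κ).ord
  neat : ∀ X : mu, (wf.apply X).rank ≠ 0 →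
    (X : Set Ordinal) = ⋃₀ {Z | Z ∈ mu ∧ Z ⊂ (X : Set Ordinal)}

namespace TwoCardinal

variable {κ : Cardinal} (M : TwoCardinal κ)

set_option linter.deprecated false in
/-- The rank of an element of `μ` in the well-founded order `(μ, ⊂)`. -/
noncomputable def rank (X : M.mu) : Ordinal := olower ((M.wf.apply X).rank)

/-- The height of the well-founded order `(μ, ⊂)`. -/
noncomputable def ht : Ordinal := sSup (Set.range fun X : M.mu => M.rank X + 1)

/-- The term `μ_ξ(α)` of the μ-sequence at `α`: equal to `X ∩ α` for any `X ∈ μ` of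
rank `ξ` containing `α` (this is independent of the choice of `X`). -/
noncomputable def seq (α ξ : Ordinal) : Set Ordinal :=
  ⋃₀ {S | ∃ X : M.mu, M.rank X = ξ ∧ α ∈ (X : Set Ordinal) ∧
    S = (X : Set Ordinal) ∩ Set.Iio α}

/-- The μ-coloring `m(α,β) = min{rank X : α, β ∈ X ∈ μ}`. -/
noncomputable def mcol (a b : Ordinal) : Ordinal :=
  sInf {ξ | ∃ X : M.mu, M.rank X = ξ ∧ a ∈ (X : Set Ordinal) ∧ b ∈ (X : Set Ordinal)}

end TwoCardinal

section Infra

theorem olower_lift (a : Ordinal.{0}) : olower (Ordinal.lift.{1} a) = a := by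
  have h : {x : Ordinal.{0} | Ordinal.lift.{1} x = Ordinal.lift.{1} a} = {a} := by
    ext x; simp [Ordinal.lift_inj]
  rw [olower, h, csInf_singleton]

theorem lift_olower {o : Ordinal.{1}} (h : ∃ a : Ordinal.{0}, Ordinal.lift.{1} a = o) :
    Ordinal.lift.{1} (olower o) = o :=
  csInf_mem h

theorem type_subrel_le {B : Set Ordinal.{0}} {ρ : Ordinal.{0}} (h : B ⊆ Set.Iio ρ) :
    Ordinal.type (Subrel ((· < ·) : Ordinal → Ordinal → Prop) (· ∈ B)) ≤ Ordinal.lift.{1} ρ := by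
  haveI : IsWellOrder ρ.ToType (· < ·) := isWellOrder_lt
  have f : Subrel ((· < ·) : Ordinal → Ordinal → Prop) (· ∈ B) ↪r
      ((· < ·) : ρ.ToType → ρ.ToType → Prop) :=
    ⟨⟨fun x => Ordinal.ToType.mk (o := ρ) ⟨x.1, h x.2⟩,
      fun x y hxy => by
        apply Subtype.ext
        exact Subtype.mk_eq_mk.mp ((Ordinal.ToType.mk (o := ρ)).injective hxy)⟩,
      by
        intro x y
        exact (Ordinal.ToType.mk (o := ρ)).lt_iff_lt⟩
  have := Ordinal.lift_type_le.{1,0,0}.2 ⟨f.collapse⟩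
  rwa [Ordinal.lift_uzero, Ordinal.type_toType] at this

theorem lift_otp_of_subset {B : Set Ordinal.{0}} {ρ : Ordinal.{0}} (h : B ⊆ Set.Iio ρ) :
    Ordinal.lift.{1} (otp B) = Ordinal.type (Subrel ((· < ·) : Ordinal → Ordinal → Prop) (· ∈ B)) :=
  lift_olower (Ordinal.mem_range_lift_of_le (type_subrel_le h))

theorem typein_subrel_eq {B : Set Ordinal.{0}} {b : Ordinal} (hb : b ∈ B) :
    Ordinal.lift.{1} (otp (B ∩ Set.Iio b)) =
      Ordinal.typein (Subrel ((· < ·) : Ordinal → Ordinal → Prop) (· ∈ B)) ⟨b, hb⟩ := by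
  rw [lift_otp_of_subset (Set.inter_subset_right : B ∩ Set.Iio b ⊆ Set.Iio b)]
  rw [← Ordinal.type_subrel]
  apply Ordinal.type_eq.2
  exact ⟨⟨⟨fun x => ⟨⟨x.1, x.2.1⟩, x.2.2⟩, fun y => ⟨y.1.1, ⟨y.1.2, y.2⟩⟩,
    fun x => rfl, fun y => rfl⟩, Iff.rfl⟩⟩

theorem otp_Iio_lt_otp {B : Set Ordinal} {ρ : Ordinal} (hB : B ⊆ Set.Iio ρ) {a : Ordinal}
    (ha : a ∈ B) : otp (B ∩ Set.Iio a) < otp B := by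
  have h := Ordinal.typein_lt_type (Subrel ((· < ·) : Ordinal → Ordinal → Prop) (· ∈ B)) ⟨a, ha⟩
  rw [← typein_subrel_eq ha, ← lift_otp_of_subset hB] at h
  exact Ordinal.lift_lt.mp h

theorem otp_Iio_lt_otp_Iio {B : Set Ordinal} {a b : Ordinal} (ha : a ∈ B) (hb : b ∈ B)
    (h : b < a) : otp (B ∩ Set.Iio b) < otp (B ∩ Set.Iio a) := by
  have h' := (Ordinal.typein_lt_typein (Subrel ((· < ·) : Ordinal → Ordinal → Prop) (· ∈ B))).2
    (show Subrel ((· < ·) : Ordinal → Ordinal → Prop) (· ∈ B) ⟨b, hb⟩ ⟨a, ha⟩ from h)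
  rw [← typein_subrel_eq hb, ← typein_subrel_eq ha] at h'
  exact Ordinal.lift_lt.mp h'

theorem exists_otp_eq {A B : Set Ordinal} {ρ : Ordinal} (hA : A ⊆ Set.Iio ρ)
    (hB : B ⊆ Set.Iio ρ) (hotp : otp A = otp B) {a : Ordinal} (ha : a ∈ A) :
    ∃ b, b ∈ B ∧ otp (B ∩ Set.Iio b) = otp (A ∩ Set.Iio a) := by
  have h : otp (A ∩ Set.Iio a) < otp B := hotp ▸ otp_Iio_lt_otp hA ha
  have h' : Ordinal.lift.{1} (otp (A ∩ Set.Iio a)) <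
      Ordinal.type (Subrel ((· < ·) : Ordinal → Ordinal → Prop) (· ∈ B)) := by
    rw [← lift_otp_of_subset hB]
    exact Ordinal.lift_lt.2 h
  obtain ⟨⟨b, hbB⟩, hb⟩ := Ordinal.typein_surj _ h'
  refine ⟨b, hbB, ?_⟩
  have h2 := typein_subrel_eq hbB
  rw [hb] at h2
  exact Ordinal.lift_inj.mp h2

theorem omap_mem_pos {A B : Set Ordinal} {ρ : Ordinal} (hA : A ⊆ Set.Iio ρ)
    (hB : B ⊆ Set.Iio ρ) (hotp : otp A = otp B) {a : Ordinal} (ha : a ∈ A) :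
    omap A B a ∈ B ∧ otp (B ∩ Set.Iio (omap A B a)) = otp (A ∩ Set.Iio a) :=
  csInf_mem (exists_otp_eq hA hB hotp ha)

theorem omap_injOn {A B : Set Ordinal} {ρ : Ordinal} (hA : A ⊆ Set.Iio ρ)
    (hB : B ⊆ Set.Iio ρ) (hotp : otp A = otp B) : Set.InjOn (omap A B) A := by
  intro a ha a' ha' e
  by_contra hne
  have h1 := (omap_mem_pos hA hB hotp ha).2
  have h2 := (omap_mem_pos hA hB hotp ha').2
  rw [e, h2] at h1
  rcases lt_or_gt_of_ne hne with h | h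
  · exact absurd h1 (ne_of_gt (otp_Iio_lt_otp_Iio ha' ha h))
  · exact absurd h1 (ne_of_lt (otp_Iio_lt_otp_Iio ha ha' h))

theorem omap_eq_self {A B : Set Ordinal} {a : Ordinal} (haB : a ∈ B)
    (h : otp (B ∩ Set.Iio a) = otp (A ∩ Set.Iio a)) : omap A B a = a := by
  have hne : {b | b ∈ B ∧ otp (B ∩ Set.Iio b) = otp (A ∩ Set.Iio a)}.Nonempty := ⟨a, haB, h⟩
  have h1 := csInf_mem hne
  have h2 : omap A B a ≤ a := csInf_le (OrderBot.bddBelow _) ⟨haB, h⟩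
  rcases h2.lt_or_eq with hlt | heq
  · exfalso
    have := otp_Iio_lt_otp_Iio haB h1.1 hlt
    rw [h1.2, h] at this
    exact lt_irrefl _ this
  · exact heq

end Infra

noncomputable def WellFounded.rank {α : Type*} {r : α → α → Prop} (hwf : WellFounded r)
    (a : α) : Ordinal := (hwf.apply a).rank

theorem WellFounded.rank_eq {α : Type*} {r : α → α → Prop} (hwf : WellFounded r) (a : α) :
    hwf.rank a = ⨆ b : { b // r b a }, Order.succ (hwf.rank b) :=
  (hwf.apply a).rank_eq

theorem WellFounded.rank_lt_of_rel {α : Type*} {r : α → α → Prop} (hwf : WellFounded r)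
    {a b : α} (h : r a b) : hwf.rank a < hwf.rank b :=
  Acc.rank_lt_of_rel _ h

set_option linter.deprecated false

namespace TwoCardinal

variable {κ : Cardinal} (M : TwoCardinal κ)

theorem isRegular_lift (h : κ.IsRegular) : (Cardinal.lift.{1} κ).IsRegular := by
  constructor
  · exact Cardinal.aleph0_le_lift.2 h.1
  · rw [← Cardinal.lift_ord, ← Ordinal.lift_cof, ← h.2.antisymm (Ordinal.cof_ord_le κ)]

theorem wfRank_lt (hκ : κ.IsRegular) (X : M.mu) :
    M.wf.rank X < Ordinal.lift.{1} ((Order.succ κ).ord) := by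
  induction X using M.wf.induction with
  | _ X IH =>
    rw [M.wf.rank_eq, Cardinal.lift_ord]
    have hreg : (Cardinal.lift.{1} (Order.succ κ)).IsRegular := by
      rw [Cardinal.lift_succ]
      exact Cardinal.isRegular_succ (by
        rw [← Cardinal.lift_aleph0.{1,0}]; exact Cardinal.lift_le.2 hκ.1)
    apply Cardinal.iSup_lt_ord_of_isRegular hreg
    · exact (M.locSmall X).trans (Cardinal.lift_lt.2 (Order.lt_succ κ))
    · rintro ⟨Y, hY⟩
      have h1 : M.wf.rank Y < (Cardinal.lift.{1} (Order.succ κ)).ord := by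
        rw [← Cardinal.lift_ord]; exact IH Y hY
      exact (Cardinal.isSuccLimit_ord (by
        rw [← Cardinal.lift_aleph0.{1,0}]
        exact Cardinal.lift_le.2 (hκ.1.trans (Order.le_succ κ)))).succ_lt h1

theorem lift_rank (hκ : κ.IsRegular) (X : M.mu) :
    Ordinal.lift.{1} (M.rank X) = M.wf.rank X :=
  lift_olower (Ordinal.mem_range_lift_of_le (M.wfRank_lt hκ X).le)

theorem mu_bounded (X : M.mu) : (X : Set Ordinal) ⊆ Set.Iio (Order.succ κ).ord :=
  M.mem_sub X X.2

/-- transfer of a proper subset along `omap` for a pair of the same rank -/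
theorem omap_mem_mu {V₁ V₂ : M.mu} (hr : M.wf.rank V₁ = M.wf.rank V₂) {W : M.mu}
    (hW : (W : Set Ordinal) ⊂ (V₁ : Set Ordinal)) :
    omap (V₁ : Set Ordinal) (V₂ : Set Ordinal) '' (W : Set Ordinal) ∈ M.mu ∧
      omap (V₁ : Set Ordinal) (V₂ : Set Ordinal) '' (W : Set Ordinal) ⊂ (V₂ : Set Ordinal) := by
  have h := (M.homog V₁ V₂ hr).2
  have : omap (V₁ : Set Ordinal) (V₂ : Set Ordinal) '' (W : Set Ordinal) ∈
      {Z | Z ∈ M.mu ∧ Z ⊂ (V₂ : Set Ordinal)} := by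
    rw [h]
    exact ⟨(W : Set Ordinal), ⟨W.2, hW⟩, rfl⟩
  exact this

theorem omap_injOn_mu {V₁ V₂ : M.mu} (hr : M.wf.rank V₁ = M.wf.rank V₂) :
    Set.InjOn (omap (V₁ : Set Ordinal) (V₂ : Set Ordinal)) (V₁ : Set Ordinal) :=
  omap_injOn (M.mu_bounded V₁) (M.mu_bounded V₂) (M.homog V₁ V₂ hr).1

theorem omap_image_ssubset {V₁ V₂ : M.mu} (hr : M.wf.rank V₁ = M.wf.rank V₂)
    {A B : Set Ordinal} (hA : A ⊆ (V₁ : Set Ordinal)) (hB : B ⊆ (V₁ : Set Ordinal))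
    (h : A ⊂ B) :
    omap (V₁ : Set Ordinal) (V₂ : Set Ordinal) '' A ⊂
      omap (V₁ : Set Ordinal) (V₂ : Set Ordinal) '' B := by
  constructor
  · exact Set.image_mono h.1
  · intro hc
    apply h.2
    intro b hb
    obtain ⟨a, ha, hab⟩ := hc (Set.mem_image_of_mem _ hb)
    rwa [← M.omap_injOn_mu hr (hA ha) (hB hb) hab]

theorem omap_image_inj {V₁ V₂ : M.mu} (hr : M.wf.rank V₁ = M.wf.rank V₂)
    {A B : Set Ordinal} (hA : A ⊆ (V₁ : Set Ordinal)) (hB : B ⊆ (V₁ : Set Ordinal))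
    (h : omap (V₁ : Set Ordinal) (V₂ : Set Ordinal) '' A =
      omap (V₁ : Set Ordinal) (V₂ : Set Ordinal) '' B) : A = B :=
  (Set.InjOn.image_eq_image_iff (M.omap_injOn_mu hr) hA hB).mp h


theorem rank_omap {V₁ V₂ : M.mu} (hr : M.wf.rank V₁ = M.wf.rank V₂) :
    ∀ W : M.mu, (W : Set Ordinal) ⊂ (V₁ : Set Ordinal) → ∀ W' : M.mu,
      (W' : Set Ordinal) = omap (V₁ : Set Ordinal) (V₂ : Set Ordinal) '' (W : Set Ordinal) →
      M.wf.rank W' = M.wf.rank W := by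
  intro W
  induction W using M.wf.induction with
  | _ W IH =>
    intro hW W' hW'
    have hW'sub : (W' : Set Ordinal) ⊂ (V₂ : Set Ordinal) := by
      rw [hW']; exact (M.omap_mem_mu hr hW).2
    -- correspondence of proper subsets
    have corr : ∀ Y' : M.mu, (Y' : Set Ordinal) ⊂ (W' : Set Ordinal) →
        ∃ Y : M.mu, (Y : Set Ordinal) ⊂ (W : Set Ordinal) ∧
          (Y' : Set Ordinal) = omap (V₁ : Set Ordinal) (V₂ : Set Ordinal) '' (Y : Set Ordinal) := by
      intro Y' hY'
      have hY'V₂ : (Y' : Set Ordinal) ⊂ (V₂ : Set Ordinal) := hY'.trans hW'sub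
      have : (Y' : Set Ordinal) ∈ {Z | Z ∈ M.mu ∧ Z ⊂ (V₂ : Set Ordinal)} := ⟨Y'.2, hY'V₂⟩
      rw [(M.homog V₁ V₂ hr).2] at this
      obtain ⟨Z, ⟨hZmu, hZV₁⟩, hZ⟩ := this
      refine ⟨⟨Z, hZmu⟩, ?_, hZ.symm⟩
      rw [← hZ, hW'] at hY'
      have hsub : Z ⊆ (W : Set Ordinal) := by
        intro z hz
        obtain ⟨w, hw, hww⟩ := hY'.1 (Set.mem_image_of_mem _ hz)
        have hwz : w = z := M.omap_injOn_mu hr (hW.1 hw) (hZV₁.1 hz) hww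
        rwa [← hwz]
      refine ⟨hsub, fun hc => hY'.2 ?_⟩
      have hZW : Z = (W : Set Ordinal) := Set.Subset.antisymm hsub hc
      exact le_of_eq (by rw [hZW])
    apply le_antisymm
    · rw [M.wf.rank_eq]
      apply Ordinal.iSup_le
      rintro ⟨Y', hY'⟩
      obtain ⟨Y, hYW, hYeq⟩ := corr Y' hY'
      have h1 : M.wf.rank Y' = M.wf.rank Y := IH Y hYW (hYW.trans hW) Y' hYeq
      rw [h1]
      exact Order.succ_le_of_lt (M.wf.rank_lt_of_rel hYW)
    · rw [M.wf.rank_eq (a := W)]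
      apply Ordinal.iSup_le
      rintro ⟨Y, hY⟩
      have hYV₁ : (Y : Set Ordinal) ⊂ (V₁ : Set Ordinal) := hY.trans hW
      obtain ⟨hmu, -⟩ := M.omap_mem_mu hr hYV₁
      set Y' : M.mu := ⟨_, hmu⟩ with hY'def
      have h1 : M.wf.rank Y' = M.wf.rank Y := IH Y hY hYV₁ Y' rfl
      have h2 : (Y' : Set Ordinal) ⊂ (W' : Set Ordinal) := by
        rw [hW']
        exact M.omap_image_ssubset hr hYV₁.1 hW.1 hY
      rw [← h1]
      exact Order.succ_le_of_lt (M.wf.rank_lt_of_rel h2)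

/-- Coherence: two members of `μ` of the same rank agree below a common element. -/
theorem coherent : ∀ V Z Z' : M.mu, (Z : Set Ordinal) ⊆ (V : Set Ordinal) →
    (Z' : Set Ordinal) ⊆ (V : Set Ordinal) → M.wf.rank Z = M.wf.rank Z' →
    ∀ α : Ordinal, α ∈ (Z : Set Ordinal) → α ∈ (Z' : Set Ordinal) →
    (Z : Set Ordinal) ∩ Set.Iio α ⊆ (Z' : Set Ordinal) ∩ Set.Iio α := by
  intro V
  induction V using M.wf.induction with
  | _ V IH =>
  intro Z Z' hZ hZ' hrank α hαZ hαZ' b hb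
  by_cases hZZ' : (Z : Set Ordinal) = (Z' : Set Ordinal)
  · rwa [← hZZ']
  by_cases hZV : (Z : Set Ordinal) = (V : Set Ordinal)
  · exfalso
    have h1 : (Z' : Set Ordinal) ⊂ (Z : Set Ordinal) :=
      ssubset_of_subset_of_ne (hZV ▸ hZ') fun h => hZZ' h.symm
    exact absurd hrank (ne_of_gt (M.wf.rank_lt_of_rel h1))
  by_cases hZ'V : (Z' : Set Ordinal) = (V : Set Ordinal)
  · exfalso
    have h1 : (Z : Set Ordinal) ⊂ (Z' : Set Ordinal) :=
      ssubset_of_subset_of_ne (hZ'V ▸ hZ) hZZ'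
    exact absurd hrank (ne_of_lt (M.wf.rank_lt_of_rel h1))
  have hZVp : (Z : Set Ordinal) ⊂ (V : Set Ordinal) := ssubset_of_subset_of_ne hZ hZV
  have hZ'Vp : (Z' : Set Ordinal) ⊂ (V : Set Ordinal) := ssubset_of_subset_of_ne hZ' hZ'V
  rcases M.locAlmostDirected V with hdir | ⟨V₁, V₂, hr, hstar, hfam⟩
  · obtain ⟨U, hUmu, hUV, hZU, hZ'U⟩ := hdir (Z : Set Ordinal) Z.2 (Z' : Set Ordinal) Z'.2 hZVp hZ'Vp
    exact IH ⟨U, hUmu⟩ hUV Z Z' hZU hZ'U hrank α hαZ hαZ' hb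
  · have hV₁V : (V₁ : Set Ordinal) ⊂ (V : Set Ordinal) := by
      have : (V₁ : Set Ordinal) ∈ {Y | Y ∈ M.mu ∧ Y ⊂ (V : Set Ordinal)} := by
        rw [hfam]; exact Or.inr (Set.mem_insert _ _)
      exact this.2
    have hV₂V : (V₂ : Set Ordinal) ⊂ (V : Set Ordinal) := by
      have : (V₂ : Set Ordinal) ∈ {Y | Y ∈ M.mu ∧ Y ⊂ (V : Set Ordinal)} := by
        rw [hfam]; exact Or.inr (Set.mem_insert_of_mem _ rfl)
      exact this.2
    have hside : ∀ Y : M.mu, (Y : Set Ordinal) ⊂ (V : Set Ordinal) →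
        (Y : Set Ordinal) ⊆ (V₁ : Set Ordinal) ∨ (Y : Set Ordinal) ⊆ (V₂ : Set Ordinal) := by
      intro Y hY
      have : (Y : Set Ordinal) ∈ {Y | Y ∈ M.mu ∧ Y ⊂ (V₁ : Set Ordinal)} ∪
          {Y | Y ∈ M.mu ∧ Y ⊂ (V₂ : Set Ordinal)} ∪
          {(V₁ : Set Ordinal), (V₂ : Set Ordinal)} := by
        rw [← hfam]; exact ⟨Y.2, hY⟩
      rcases this with (h | h) | h
      · exact Or.inl h.2.1
      · exact Or.inr h.2.1
      · rcases h with h | h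
        · exact Or.inl (le_of_eq h)
        · exact Or.inr (le_of_eq h)
    have hE : ¬((V₁ : Set Ordinal) ⊆ (V₂ : Set Ordinal)) → ∀ a ∈ (V₁ : Set Ordinal) ∩ (V₂ : Set Ordinal),
        (V₁ : Set Ordinal) ∩ Set.Iio a = (V₂ : Set Ordinal) ∩ Set.Iio a := by
      intro hns a ha
      obtain ⟨d, hd1, hd2⟩ := Set.not_subset.mp hns
      ext c
      constructor
      · rintro ⟨hc1, hc2⟩
        refine ⟨?_, hc2⟩
        by_contra hc
        exact absurd hc2 (not_lt.2 (le_of_lt (hstar.2.2.1 a ha c ⟨hc1, hc⟩)))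
      · rintro ⟨hc1, hc2⟩
        refine ⟨?_, hc2⟩
        by_contra hc
        have h1 : a < d := hstar.2.2.1 a ha d ⟨hd1, hd2⟩
        have h2 : d < c := hstar.2.2.2 d ⟨hd1, hd2⟩ c ⟨hc1, hc⟩
        exact absurd hc2 (not_lt.2 (le_of_lt (h1.trans h2)))
    have homap₁ : ¬((V₁ : Set Ordinal) ⊆ (V₂ : Set Ordinal)) →
        ∀ b ∈ (V₁ : Set Ordinal) ∩ (V₂ : Set Ordinal), omap (V₁ : Set Ordinal) (V₂ : Set Ordinal) b = b :=
      fun hns b hb => omap_eq_self hb.2 (congrArg otp (hE hns b hb)).symm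
    have homap₂ : ¬((V₁ : Set Ordinal) ⊆ (V₂ : Set Ordinal)) →
        ∀ b ∈ (V₁ : Set Ordinal) ∩ (V₂ : Set Ordinal), omap (V₂ : Set Ordinal) (V₁ : Set Ordinal) b = b :=
      fun hns b hb => omap_eq_self hb.1 (congrArg otp (hE hns b hb))
    rcases hside Z hZVp with h1 | h1 <;> rcases hside Z' hZ'Vp with h2 | h2
    · exact IH V₁ hV₁V Z Z' h1 h2 hrank α hαZ hαZ' hb
    · -- Z ⊆ V₁, Z' ⊆ V₂
      by_cases h12 : (V₁ : Set Ordinal) ⊆ (V₂ : Set Ordinal)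
      · exact IH V₂ hV₂V Z Z' (h1.trans h12) h2 hrank α hαZ hαZ' hb
      have hαV : α ∈ (V₁ : Set Ordinal) ∩ (V₂ : Set Ordinal) := ⟨h1 hαZ, h2 hαZ'⟩
      by_cases hZV₁ : (Z : Set Ordinal) = (V₁ : Set Ordinal)
      · have hZ'eq : (Z' : Set Ordinal) = (V₂ : Set Ordinal) := by
          by_contra hne
          have h3 : M.wf.rank Z' < M.wf.rank V₂ :=
            M.wf.rank_lt_of_rel (ssubset_of_subset_of_ne h2 hne)
          have h4 : M.wf.rank Z = M.wf.rank V₁ := by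
            rw [Subtype.ext hZV₁]
          exact absurd hrank (ne_of_gt (by rw [h4, show M.wf.rank V₁ = M.wf.rank V₂ from hr]; exact h3))
        have hbV₁ : b ∈ (V₁ : Set Ordinal) ∩ Set.Iio α := ⟨h1 hb.1, hb.2⟩
        rw [hE h12 α hαV] at hbV₁
        rw [hZ'eq]
        exact hbV₁
      · have hZV₁p : (Z : Set Ordinal) ⊂ (V₁ : Set Ordinal) := ssubset_of_subset_of_ne h1 hZV₁
        obtain ⟨hmu', hsub'⟩ := M.omap_mem_mu hr hZV₁p
        set Z'' : M.mu := ⟨_, hmu'⟩ with hZ''def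
        have hrank'' : M.wf.rank Z'' = M.wf.rank Z := M.rank_omap hr Z hZV₁p Z'' rfl
        have hαZ'' : α ∈ (Z'' : Set Ordinal) := ⟨α, hαZ, homap₁ h12 α hαV⟩
        have hbV : b ∈ (V₁ : Set Ordinal) ∩ (V₂ : Set Ordinal) := by
          have hbV₁ : b ∈ (V₁ : Set Ordinal) ∩ Set.Iio α := ⟨h1 hb.1, hb.2⟩
          have := hbV₁; rw [hE h12 α hαV] at this
          exact ⟨hbV₁.1, this.1⟩
        have hbZ'' : b ∈ (Z'' : Set Ordinal) := ⟨b, hb.1, homap₁ h12 b hbV⟩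
        exact IH V₂ hV₂V Z'' Z' hsub'.1 h2 (hrank''.trans hrank) α hαZ'' hαZ' ⟨hbZ'', hb.2⟩
    · -- Z ⊆ V₂, Z' ⊆ V₁
      by_cases h12 : (V₁ : Set Ordinal) ⊆ (V₂ : Set Ordinal)
      · exact IH V₂ hV₂V Z Z' h1 (h2.trans h12) hrank α hαZ hαZ' hb
      have hαV : α ∈ (V₁ : Set Ordinal) ∩ (V₂ : Set Ordinal) := ⟨h2 hαZ', h1 hαZ⟩
      by_cases hZV₂ : (Z : Set Ordinal) = (V₂ : Set Ordinal)
      · have hZ'eq : (Z' : Set Ordinal) = (V₁ : Set Ordinal) := by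
          by_contra hne
          have h3 : M.wf.rank Z' < M.wf.rank V₁ :=
            M.wf.rank_lt_of_rel (ssubset_of_subset_of_ne h2 hne)
          have h4 : M.wf.rank Z = M.wf.rank V₂ := by
            rw [Subtype.ext hZV₂]
          exact absurd hrank (ne_of_gt (by rw [h4, ← show M.wf.rank V₁ = M.wf.rank V₂ from hr]; exact h3))
        have hbV₂ : b ∈ (V₂ : Set Ordinal) ∩ Set.Iio α := ⟨h1 hb.1, hb.2⟩
        rw [← hE h12 α hαV] at hbV₂
        rw [hZ'eq]
        exact hbV₂
      · have hZV₂p : (Z : Set Ordinal) ⊂ (V₂ : Set Ordinal) := ssubset_of_subset_of_ne h1 hZV₂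
        obtain ⟨hmu', hsub'⟩ := M.omap_mem_mu hr.symm hZV₂p
        set Z'' : M.mu := ⟨_, hmu'⟩ with hZ''def
        have hrank'' : M.wf.rank Z'' = M.wf.rank Z := M.rank_omap hr.symm Z hZV₂p Z'' rfl
        have hαZ'' : α ∈ (Z'' : Set Ordinal) := ⟨α, hαZ, homap₂ h12 α hαV⟩
        have hbV : b ∈ (V₁ : Set Ordinal) ∩ (V₂ : Set Ordinal) := by
          have hbV₂ : b ∈ (V₂ : Set Ordinal) ∩ Set.Iio α := ⟨h1 hb.1, hb.2⟩
          have := hbV₂; rw [← hE h12 α hαV] at this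
          exact ⟨this.1, hbV₂.1⟩
        have hbZ'' : b ∈ (Z'' : Set Ordinal) := ⟨b, hb.1, homap₂ h12 b hbV⟩
        exact IH V₁ hV₁V Z'' Z' hsub'.1 h2 (hrank''.trans hrank) α hαZ'' hαZ' ⟨hbZ'', hb.2⟩
    · exact IH V₂ hV₂V Z Z' h1 h2 hrank α hαZ hαZ' hb

/-- The main covering lemma: if `X, Z ∈ μ`, `rank X < rank Z`, `rank Z` is a limit and
`α ∈ Z`, then there is `W ∈ μ` of smaller rank than `Z` containing `α` and `X ∩ Z ∩ α`. -/
theorem cover_lemma : ∀ V X Z : M.mu, (X : Set Ordinal) ⊆ (V : Set Ordinal) →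
    (Z : Set Ordinal) ⊆ (V : Set Ordinal) → M.wf.rank X < M.wf.rank Z →
    Order.IsSuccLimit (M.wf.rank Z) → ∀ α ∈ (Z : Set Ordinal),
    ∃ W : M.mu, M.wf.rank W < M.wf.rank Z ∧ α ∈ (W : Set Ordinal) ∧
      (X : Set Ordinal) ∩ (Z : Set Ordinal) ∩ Set.Iio α ⊆ (W : Set Ordinal) := by
  intro V
  induction V using M.wf.induction with
  | _ V IH =>
  intro X Z hXV hZV hrank hlim α hαZ
  by_cases hZeqV : (Z : Set Ordinal) = (V : Set Ordinal)
  · -- base case: `Z` is on top; its subsets are directed since its rank is a limit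
    have hXZ : (X : Set Ordinal) ⊂ (Z : Set Ordinal) := by
      refine ssubset_of_subset_of_ne (hZeqV ▸ hXV) fun h => ?_
      rw [Subtype.ext h] at hrank
      exact absurd hrank (lt_irrefl _)
    rcases M.locAlmostDirected Z with hdir | ⟨Z₁, Z₂, hr, hstar, hfam⟩
    · have hne : M.wf.rank Z ≠ 0 := hlim.ne_bot
      have hneat := M.neat Z hne
      have hα' : α ∈ ⋃₀ {Y | Y ∈ M.mu ∧ Y ⊂ (Z : Set Ordinal)} := hneat ▸ hαZ
      obtain ⟨S, ⟨hSmu, hSZ⟩, hαS⟩ := hα'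
      obtain ⟨W, hWmu, hWZ, hXW, hSW⟩ := hdir (X : Set Ordinal) X.2 S hSmu hXZ hSZ
      refine ⟨⟨W, hWmu⟩, M.wf.rank_lt_of_rel hWZ, hSW hαS, ?_⟩
      intro b hb
      exact hXW hb.1.1
    · -- star case is impossible when the rank is a limit
      exfalso
      have hZ₁Z : (Z₁ : Set Ordinal) ⊂ (Z : Set Ordinal) := by
        have : (Z₁ : Set Ordinal) ∈ {Y | Y ∈ M.mu ∧ Y ⊂ (Z : Set Ordinal)} := by
          rw [hfam]; exact Or.inr (Set.mem_insert _ _)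
        exact this.2
      have hle : M.wf.rank Z ≤ Order.succ (M.wf.rank Z₁) := by
        rw [M.wf.rank_eq]
        apply Ordinal.iSup_le
        rintro ⟨Y, hY⟩
        have : (Y : Set Ordinal) ∈ {Y | Y ∈ M.mu ∧ Y ⊂ (Z₁ : Set Ordinal)} ∪
            {Y | Y ∈ M.mu ∧ Y ⊂ (Z₂ : Set Ordinal)} ∪
            {(Z₁ : Set Ordinal), (Z₂ : Set Ordinal)} := by
          rw [← hfam]; exact ⟨Y.2, hY⟩
        have hYle : M.wf.rank Y ≤ M.wf.rank Z₁ := by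
          rcases this with (h | h) | h
          · exact (M.wf.rank_lt_of_rel h.2).le
          · rw [show M.wf.rank Z₁ = M.wf.rank Z₂ from hr]; exact (M.wf.rank_lt_of_rel h.2).le
          · rcases h with h | h
            · rw [Subtype.ext h]
            · rw [Subtype.ext h, show M.wf.rank Z₁ = M.wf.rank Z₂ from hr]
        exact Order.succ_le_succ hYle
      have hlt : Order.succ (M.wf.rank Z₁) < M.wf.rank Z :=
        hlim.succ_lt (M.wf.rank_lt_of_rel hZ₁Z)
      exact absurd hle (not_le.2 hlt)
  · -- recursive case: `Z` is a proper subset of `V`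
    have hZVp : (Z : Set Ordinal) ⊂ (V : Set Ordinal) := ssubset_of_subset_of_ne hZV hZeqV
    have hXVp : (X : Set Ordinal) ⊂ (V : Set Ordinal) := by
      refine ssubset_of_subset_of_ne hXV fun h => ?_
      have h1 : (Z : Set Ordinal) ⊂ (X : Set Ordinal) := h.symm ▸ hZVp
      exact absurd hrank (not_lt.2 (M.wf.rank_lt_of_rel h1).le)
    rcases M.locAlmostDirected V with hdir | ⟨V₁, V₂, hr, hstar, hfam⟩
    · obtain ⟨U, hUmu, hUV, hXU, hZU⟩ :=
        hdir (X : Set Ordinal) X.2 (Z : Set Ordinal) Z.2 hXVp hZVp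
      exact IH ⟨U, hUmu⟩ hUV X Z hXU hZU hrank hlim α hαZ
    · have hV₁V : (V₁ : Set Ordinal) ⊂ (V : Set Ordinal) := by
        have : (V₁ : Set Ordinal) ∈ {Y | Y ∈ M.mu ∧ Y ⊂ (V : Set Ordinal)} := by
          rw [hfam]; exact Or.inr (Set.mem_insert _ _)
        exact this.2
      have hV₂V : (V₂ : Set Ordinal) ⊂ (V : Set Ordinal) := by
        have : (V₂ : Set Ordinal) ∈ {Y | Y ∈ M.mu ∧ Y ⊂ (V : Set Ordinal)} := by
          rw [hfam]; exact Or.inr (Set.mem_insert_of_mem _ rfl)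
        exact this.2
      have hside : ∀ Y : M.mu, (Y : Set Ordinal) ⊂ (V : Set Ordinal) →
          (Y : Set Ordinal) ⊆ (V₁ : Set Ordinal) ∨ (Y : Set Ordinal) ⊆ (V₂ : Set Ordinal) := by
        intro Y hY
        have : (Y : Set Ordinal) ∈ {Y | Y ∈ M.mu ∧ Y ⊂ (V₁ : Set Ordinal)} ∪
            {Y | Y ∈ M.mu ∧ Y ⊂ (V₂ : Set Ordinal)} ∪
            {(V₁ : Set Ordinal), (V₂ : Set Ordinal)} := by
          rw [← hfam]; exact ⟨Y.2, hY⟩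
        rcases this with (h | h) | h
        · exact Or.inl h.2.1
        · exact Or.inr h.2.1
        · rcases h with h | h
          · exact Or.inl (le_of_eq h)
          · exact Or.inr (le_of_eq h)
      have hE : ¬((V₁ : Set Ordinal) ⊆ (V₂ : Set Ordinal)) →
          ∀ a ∈ (V₁ : Set Ordinal) ∩ (V₂ : Set Ordinal),
          (V₁ : Set Ordinal) ∩ Set.Iio a = (V₂ : Set Ordinal) ∩ Set.Iio a := by
        intro hns a ha
        obtain ⟨d, hd1, hd2⟩ := Set.not_subset.mp hns
        ext c
        constructor
        · rintro ⟨hc1, hc2⟩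
          refine ⟨?_, hc2⟩
          by_contra hc
          exact absurd hc2 (not_lt.2 (le_of_lt (hstar.2.2.1 a ha c ⟨hc1, hc⟩)))
        · rintro ⟨hc1, hc2⟩
          refine ⟨?_, hc2⟩
          by_contra hc
          have h1 : a < d := hstar.2.2.1 a ha d ⟨hd1, hd2⟩
          have h2 : d < c := hstar.2.2.2 d ⟨hd1, hd2⟩ c ⟨hc1, hc⟩
          exact absurd hc2 (not_lt.2 (le_of_lt (h1.trans h2)))
      have homap₁ : ¬((V₁ : Set Ordinal) ⊆ (V₂ : Set Ordinal)) →
          ∀ b ∈ (V₁ : Set Ordinal) ∩ (V₂ : Set Ordinal),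
          omap (V₁ : Set Ordinal) (V₂ : Set Ordinal) b = b :=
        fun hns b hb => omap_eq_self hb.2 (congrArg otp (hE hns b hb)).symm
      have homap₂ : ¬((V₁ : Set Ordinal) ⊆ (V₂ : Set Ordinal)) →
          ∀ b ∈ (V₁ : Set Ordinal) ∩ (V₂ : Set Ordinal),
          omap (V₂ : Set Ordinal) (V₁ : Set Ordinal) b = b :=
        fun hns b hb => omap_eq_self hb.1 (congrArg otp (hE hns b hb))
      rcases hside X hXVp with h1 | h1 <;> rcases hside Z hZVp with h2 | h2
      · exact IH V₁ hV₁V X Z h1 h2 hrank hlim α hαZ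
      · -- X ⊆ V₁, Z ⊆ V₂
        by_cases h12 : (V₁ : Set Ordinal) ⊆ (V₂ : Set Ordinal)
        · exact IH V₂ hV₂V X Z (h1.trans h12) h2 hrank hlim α hαZ
        have hXV₁ : (X : Set Ordinal) ⊂ (V₁ : Set Ordinal) := by
          refine ssubset_of_subset_of_ne h1 fun h => ?_
          have hZle : M.wf.rank Z ≤ M.wf.rank V₂ := by
            rcases ssubset_or_eq_of_subset h2 with hs | hs
            · exact (M.wf.rank_lt_of_rel hs).le
            · rw [Subtype.ext hs]
          have : M.wf.rank X = M.wf.rank V₂ := by rw [Subtype.ext h, show M.wf.rank V₁ = M.wf.rank V₂ from hr]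
          exact absurd hrank (not_lt.2 (hZle.trans this.ge))
        obtain ⟨hmu', hsub'⟩ := M.omap_mem_mu hr hXV₁
        set X' : M.mu := ⟨_, hmu'⟩ with hX'def
        have hrank' : M.wf.rank X' = M.wf.rank X := M.rank_omap hr X hXV₁ X' rfl
        obtain ⟨W, hW1, hW2, hW3⟩ := IH V₂ hV₂V X' Z hsub'.1 h2
          (by rw [hrank']; exact hrank) hlim α hαZ
        refine ⟨W, hW1, hW2, ?_⟩
        intro b hb
        have hbV : b ∈ (V₁ : Set Ordinal) ∩ (V₂ : Set Ordinal) := ⟨h1 hb.1.1, h2 hb.1.2⟩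
        have hbX' : b ∈ (X' : Set Ordinal) := ⟨b, hb.1.1, homap₁ h12 b hbV⟩
        exact hW3 ⟨⟨hbX', hb.1.2⟩, hb.2⟩
      · -- X ⊆ V₂, Z ⊆ V₁
        by_cases h12 : (V₁ : Set Ordinal) ⊆ (V₂ : Set Ordinal)
        · exact IH V₂ hV₂V X Z h1 (h2.trans h12) hrank hlim α hαZ
        have hXV₂ : (X : Set Ordinal) ⊂ (V₂ : Set Ordinal) := by
          refine ssubset_of_subset_of_ne h1 fun h => ?_
          have hZle : M.wf.rank Z ≤ M.wf.rank V₁ := by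
            rcases ssubset_or_eq_of_subset h2 with hs | hs
            · exact (M.wf.rank_lt_of_rel hs).le
            · rw [Subtype.ext hs]
          have : M.wf.rank X = M.wf.rank V₁ := by rw [Subtype.ext h, show M.wf.rank V₁ = M.wf.rank V₂ from hr]
          exact absurd hrank (not_lt.2 (hZle.trans this.ge))
        obtain ⟨hmu', hsub'⟩ := M.omap_mem_mu hr.symm hXV₂
        set X' : M.mu := ⟨_, hmu'⟩ with hX'def
        have hrank' : M.wf.rank X' = M.wf.rank X := M.rank_omap hr.symm X hXV₂ X' rfl
        obtain ⟨W, hW1, hW2, hW3⟩ := IH V₁ hV₁V X' Z hsub'.1 h2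
          (by rw [hrank']; exact hrank) hlim α hαZ
        refine ⟨W, hW1, hW2, ?_⟩
        intro b hb
        have hbV : b ∈ (V₁ : Set Ordinal) ∩ (V₂ : Set Ordinal) := ⟨h2 hb.1.2, h1 hb.1.1⟩
        have hbX' : b ∈ (X' : Set Ordinal) := ⟨b, hb.1.1, homap₂ h12 b hbV⟩
        exact hW3 ⟨⟨hbX', hb.1.2⟩, hb.2⟩
      · exact IH V₂ hV₂V X Z h1 h2 hrank hlim α hαZ

end TwoCardinal

set_option linter.unusedVariables false in
/-- If `X ∈ μ` has rank less than a limit ordinal `δ < ht(μ)`, then `X ∩ μ_δ(α)` is contained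
in some earlier term `μ_{δ'}(α)` of the μ-sequence at `α`. -/
theorem museq_cof (κ : Cardinal) (hκ : κ.IsRegular) (M : TwoCardinal κ)
    (α : Ordinal) (hα : α < (Order.succ κ).ord) (δ : Ordinal) (hδlim : Order.IsSuccLimit δ)
    (hδ : δ < M.ht) (X : M.mu) (hrk : M.rank X < δ) :
    ∃ δ' < δ, (X : Set Ordinal) ∩ M.seq α δ ⊆ M.seq α δ' := by
  by_cases hne : ((X : Set Ordinal) ∩ M.seq α δ).Nonempty
  · obtain ⟨b₀, hb₀X, hb₀s⟩ := hne
    obtain ⟨S, ⟨Z₀, hZ₀r, hZ₀α, hS⟩, hb₀S⟩ := hb₀s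
    have hZ₀wr : M.wf.rank Z₀ = Ordinal.lift.{1} δ := by
      rw [← M.lift_rank hκ Z₀, hZ₀r]
    have hXwr : M.wf.rank X < Ordinal.lift.{1} δ := by
      rw [← M.lift_rank hκ X]
      exact Ordinal.lift_lt.2 hrk
    have hlim : Order.IsSuccLimit (Ordinal.lift.{1} δ) := Ordinal.isSuccLimit_lift.2 hδlim
    obtain ⟨Vs, hVmu, hXVs, hZVs⟩ := M.directed (X : Set Ordinal) X.2 (Z₀ : Set Ordinal) Z₀.2
    obtain ⟨W, hWrank, hαW, hWcov⟩ := M.cover_lemma ⟨Vs, hVmu⟩ X Z₀ hXVs hZVs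
      (by rw [hZ₀wr]; exact hXwr) (by rw [hZ₀wr]; exact hlim) α hZ₀α
    refine ⟨M.rank W, ?_, ?_⟩
    · rw [← Ordinal.lift_lt.{1}, M.lift_rank hκ W]
      rw [hZ₀wr] at hWrank
      exact hWrank
    · rintro b ⟨hbX, hbs⟩
      obtain ⟨S', ⟨Z₁, hZ₁r, hZ₁α, hS'⟩, hbS'⟩ := hbs
      rw [hS'] at hbS'
      have hZ₁wr : M.wf.rank Z₁ = Ordinal.lift.{1} δ := by
        rw [← M.lift_rank hκ Z₁, hZ₁r]
      obtain ⟨U, hUmu, hZ₁U, hZ₀U⟩ := M.directed (Z₁ : Set Ordinal) Z₁.2 (Z₀ : Set Ordinal) Z₀.2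
      have hcoh := M.coherent ⟨U, hUmu⟩ Z₁ Z₀ hZ₁U hZ₀U (by rw [hZ₁wr, hZ₀wr]) α hZ₁α hZ₀α
      have hbZ₀ : b ∈ (Z₀ : Set Ordinal) ∩ Set.Iio α := hcoh hbS'
      have hbW : b ∈ (W : Set Ordinal) := hWcov ⟨⟨hbX, hbZ₀.1⟩, hbZ₀.2⟩
      exact ⟨(W : Set Ordinal) ∩ Set.Iio α, ⟨W, rfl, hαW, rfl⟩, hbW, hbZ₀.2⟩
  · rw [Set.not_nonempty_iff_eq_empty] at hne
    exact ⟨0, hδlim.pos, by rw [hne]; exact Set.empty_subset _⟩
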